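/- Let p be a positive integer, γ > 0, let g, h : ℝ^p → ℝ be convex, and let f : ℝ^p → ℝ be convex and L-smooth with L > 0. Let y ∈ ℝ^p, let (x, z) be a three-operator splitting step from y, set y⁺ = y − x + z, and let (x⁺, z⁺) be a three-operator splitting step from y⁺. With G(y) = (x − z)/γ and G(y⁺) = (x⁺ − z⁺)/γ, it holds that ‖G(y⁺)‖² ≤ ‖G(y)‖² − (1 − γL/2)·‖G(y⁺) − G(y)‖². -/

import Mathlib

open RealInnerProductSpace

/-- `x` is a proximal point of `φ` at `y` with parameter `γ`:
it minimizes `u ↦ φ u + (1/(2γ)) ‖u - y‖²`. -/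
def IsProxPt {p : ℕ} (γ : ℝ) (φ : EuclideanSpace ℝ (Fin p) → ℝ)
    (y x : EuclideanSpace ℝ (Fin p)) : Prop :=
  ∀ u : EuclideanSpace ℝ (Fin p),
    φ x + (1 / (2 * γ)) * ‖x - y‖ ^ 2 ≤ φ u + (1 / (2 * γ)) * ‖u - y‖ ^ 2

/-- `(x, z)` is a three-operator splitting step from `y`. -/
def IsSplitStep {p : ℕ} (γ : ℝ) (g h f : EuclideanSpace ℝ (Fin p) → ℝ)
    (y x z : EuclideanSpace ℝ (Fin p)) : Prop :=
  IsProxPt γ g y x ∧ IsProxPt γ h ((2 : ℝ) • x - y - γ • gradient f x) z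

/-- `f` is `L`-smooth: differentiable with `L`-Lipschitz gradient. -/
def LSmooth {p : ℕ} (L : ℝ) (f : EuclideanSpace ℝ (Fin p) → ℝ) : Prop :=
  Differentiable ℝ f ∧ ∀ a b : EuclideanSpace ℝ (Fin p),
    ‖gradient f a - gradient f b‖ ≤ L * ‖a - b‖

/-- `u` is a subgradient of `φ` at `x`. -/
def IsSubgradient {p : ℕ} (φ : EuclideanSpace ℝ (Fin p) → ℝ)
    (x u : EuclideanSpace ℝ (Fin p)) : Prop :=
  ∀ w : EuclideanSpace ℝ (Fin p), φ w ≥ φ x + ⟪u, w - x⟫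

section Aux

open Filter Set Topology

variable {p : ℕ}
local notation "E" => EuclideanSpace ℝ (Fin p)

lemma aux_hasGradientAt_inner (c u : E) :
    HasGradientAt (fun v : E => ⟪c, v⟫) c u := by
  rw [hasGradientAt_iff_hasFDerivAt]
  exact (InnerProductSpace.toDual ℝ E c).hasFDerivAt

lemma aux_curve_deriv {f : E → ℝ} {f' : E → E} (hf : ∀ u, HasGradientAt f (f' u) u)
    (a d : E) (t : ℝ) :
    HasDerivAt (fun s : ℝ => f (a + s • d)) ⟪f' (a + t • d), d⟫ t := by
  have hc : HasDerivAt (fun s : ℝ => a + s • d) d t := by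
    simpa using ((hasDerivAt_id t).smul_const d).const_add a
  have h2 := (hf (a + t • d)).hasFDerivAt.comp_hasDerivAt t hc
  simpa [InnerProductSpace.toDual_apply_apply, Function.comp_def] using h2

lemma aux_convex_grad_le {f : E → ℝ} {f' : E → E} (hf : ∀ u, HasGradientAt f (f' u) u)
    (hconv : ConvexOn ℝ Set.univ f) (a b : E) :
    f a + ⟪f' a, b - a⟫ ≤ f b := by
  have hd : HasDerivAt (fun s : ℝ => f (a + s • (b - a))) ⟪f' a, b - a⟫ 0 := by
    simpa using aux_curve_deriv hf a (b - a) 0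
  have hslope : Tendsto (slope (fun s : ℝ => f (a + s • (b - a))) 0) (𝓝[>] 0)
      (𝓝 ⟪f' a, b - a⟫) :=
    (hasDerivAt_iff_tendsto_slope.mp hd).mono_left
      (nhdsWithin_mono 0 fun t ht => by simpa using ne_of_gt ht)
  have hev : ∀ᶠ t in 𝓝[>] (0:ℝ),
      slope (fun s : ℝ => f (a + s • (b - a))) 0 t ≤ f b - f a := by
    filter_upwards [Ioo_mem_nhdsGT (by norm_num : (0:ℝ) < 1)] with t ht
    have h1 : f (a + t • (b - a)) ≤ (1 - t) * f a + t * f b := by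
      have hpt : a + t • (b - a) = (1 - t) • a + t • b := by module
      rw [hpt]
      exact hconv.2 (Set.mem_univ a) (Set.mem_univ b) (by linarith [ht.2]) ht.1.le (by ring)
    rw [slope_def_field]
    simp only [zero_smul, add_zero, sub_zero]
    rw [div_le_iff₀ ht.1]
    nlinarith [ht.1, ht.2]
  linarith [le_of_tendsto hslope hev]

lemma aux_descent {f : E → ℝ} {f' : E → E} {L : ℝ}
    (hf : ∀ u, HasGradientAt f (f' u) u)
    (hlip : ∀ a b : E, ‖f' a - f' b‖ ≤ L * ‖a - b‖) (a b : E) :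
    f b ≤ f a + ⟪f' a, b - a⟫ + L / 2 * ‖b - a‖ ^ 2 := by
  set d := b - a with hd
  set ψ : ℝ → ℝ := fun t => L / 2 * t ^ 2 * ‖d‖ ^ 2 - f (a + t • d) + t * ⟪f' a, d⟫ with hψ
  have hderiv : ∀ t : ℝ, HasDerivAt ψ
      (L * t * ‖d‖ ^ 2 - ⟪f' (a + t • d), d⟫ + ⟪f' a, d⟫) t := by
    intro t
    have h1 : HasDerivAt (fun t : ℝ => L / 2 * t ^ 2 * ‖d‖ ^ 2) (L * t * ‖d‖ ^ 2) t := by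
      have h := (((hasDerivAt_pow 2 t).const_mul (L / 2)).mul_const (‖d‖ ^ 2))
      refine h.congr_deriv ?_
      ring
    have h2 := aux_curve_deriv hf a d t
    have h3 : HasDerivAt (fun t : ℝ => t * ⟪f' a, d⟫) ⟪f' a, d⟫ t := by
      simpa using (hasDerivAt_id t).mul_const ⟪f' a, d⟫
    exact (h1.sub h2).add h3
  have hmono : MonotoneOn ψ (Set.Icc (0:ℝ) 1) := by
    apply monotoneOn_of_deriv_nonneg (convex_Icc 0 1)
    · exact fun t _ => (hderiv t).continuousAt.continuousWithinAt
    · exact fun t _ => (hderiv t).differentiableAt.differentiableWithinAt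
    · intro t ht
      rw [interior_Icc] at ht
      rw [(hderiv t).deriv]
      have hb1 : ⟪f' (a + t • d) - f' a, d⟫ ≤ ‖f' (a + t • d) - f' a‖ * ‖d‖ :=
        real_inner_le_norm _ _
      have hb2 : ‖f' (a + t • d) - f' a‖ ≤ L * (t * ‖d‖) := by
        have h := hlip (a + t • d) a
        have hs : a + t • d - a = t • d := by module
        rw [hs, norm_smul] at h
        simpa [abs_of_pos ht.1] using h
      have hsub : ⟪f' (a + t • d), d⟫ - ⟪f' a, d⟫ ≤ L * t * ‖d‖ ^ 2 := by
        rw [← inner_sub_left]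
        nlinarith [norm_nonneg (f' (a + t • d) - f' a), norm_nonneg d]
      linarith
  have h01 := hmono (Set.left_mem_Icc.mpr zero_le_one) (Set.right_mem_Icc.mpr zero_le_one)
    zero_le_one
  have hψ0 : ψ 0 = -f a := by simp [hψ]
  have hψ1 : ψ 1 = L / 2 * ‖d‖ ^ 2 - f b + ⟪f' a, d⟫ := by simp [hψ, hd]
  rw [hψ0, hψ1] at h01
  linarith

lemma aux_coco {f : E → ℝ} {L : ℝ} (hL : 0 < L)
    (hconv : ConvexOn ℝ Set.univ f) (hdiff : Differentiable ℝ f)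
    (hlip : ∀ a b : E, ‖gradient f a - gradient f b‖ ≤ L * ‖a - b‖) (a b : E) :
    ‖gradient f a - gradient f b‖ ^ 2 ≤ L * ⟪gradient f a - gradient f b, a - b⟫ := by
  have hgrad : ∀ u : E, HasGradientAt f (gradient f u) u := fun u => (hdiff u).hasGradientAt
  have key : ∀ u v : E, f v + ⟪gradient f v, u - v⟫
      + 1 / (2 * L) * ‖gradient f u - gradient f v‖ ^ 2 ≤ f u := by
    intro u v
    set φ : E → ℝ := fun w => f w - ⟪gradient f v, w⟫ with hφdef
    set φ' : E → E := fun w => gradient f w - gradient f v with hφ'def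
    have hφ : ∀ w, HasGradientAt φ (φ' w) w := by
      intro w
      rw [hasGradientAt_iff_hasFDerivAt]
      have h := (hgrad w).hasFDerivAt.sub (aux_hasGradientAt_inner (gradient f v) w).hasFDerivAt
      refine h.congr_fderiv ?_
      simp [hφ'def, map_sub]
    have hφlip : ∀ w₁ w₂ : E, ‖φ' w₁ - φ' w₂‖ ≤ L * ‖w₁ - w₂‖ := by
      intro w₁ w₂
      have : φ' w₁ - φ' w₂ = gradient f w₁ - gradient f w₂ := by simp [hφ'def]
      rw [this]; exact hlip w₁ w₂
    have hφconv : ConvexOn ℝ Set.univ φ := by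
      refine ⟨convex_univ, fun x _ z _ s t hs ht hst => ?_⟩
      have h1 := hconv.2 (Set.mem_univ x) (Set.mem_univ z) hs ht hst
      have h2 : ⟪gradient f v, s • x + t • z⟫
          = s * ⟪gradient f v, x⟫ + t * ⟪gradient f v, z⟫ := by
        rw [inner_add_right, real_inner_smul_right, real_inner_smul_right]
      simp only [smul_eq_mul] at h1
      simp only [hφdef, smul_eq_mul]
      rw [h2]; linarith
    have hmin : ∀ w : E, φ v ≤ φ w := by
      intro w
      have h := aux_convex_grad_le hφ hφconv v w
      have : φ' v = 0 := by simp [hφ'def]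
      rw [this] at h
      simpa using h
    have hdesc := aux_descent hφ hφlip u (u - L⁻¹ • φ' u)
    have he1 : u - L⁻¹ • φ' u - u = -(L⁻¹ • φ' u) := by abel
    rw [he1] at hdesc
    have he2 : ⟪φ' u, -(L⁻¹ • φ' u)⟫ = -(L⁻¹ * ‖φ' u‖ ^ 2) := by
      rw [inner_neg_right, real_inner_smul_right, real_inner_self_eq_norm_sq]
    have he3 : ‖-(L⁻¹ • φ' u)‖ ^ 2 = (L⁻¹)^2 * ‖φ' u‖ ^ 2 := by
      rw [norm_neg, norm_smul, Real.norm_eq_abs, abs_of_pos (inv_pos.2 hL)]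
      ring
    rw [he2, he3] at hdesc
    have hcomb := (hmin (u - L⁻¹ • φ' u)).trans hdesc
    have harith : L / 2 * ((L⁻¹)^2 * ‖φ' u‖ ^ 2) - L⁻¹ * ‖φ' u‖ ^ 2
        = -(1 / (2 * L) * ‖φ' u‖ ^ 2) := by
      field_simp
      ring
    have hφu : φ' u = gradient f u - gradient f v := rfl
    have hφv : φ v = f v - ⟪gradient f v, v⟫ := rfl
    have hφu2 : φ u = f u - ⟪gradient f v, u⟫ := rfl
    have hiu : ⟪gradient f v, u - v⟫ = ⟪gradient f v, u⟫ - ⟪gradient f v, v⟫ :=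
      inner_sub_right _ _ _
    rw [hφu, hφv, hφu2] at hcomb
    linarith [hcomb, harith.symm.le]
  have k1 := key a b
  have k2 := key b a
  have hrev : ‖gradient f b - gradient f a‖ = ‖gradient f a - gradient f b‖ := norm_sub_rev _ _
  rw [hrev] at k2
  have hi1 : ⟪gradient f a, b - a⟫ = -⟪gradient f a, a - b⟫ := by
    rw [show b - a = -(a - b) by abel, inner_neg_right]
  have hi2 : ⟪gradient f a - gradient f b, a - b⟫
      = ⟪gradient f a, a - b⟫ - ⟪gradient f b, a - b⟫ := inner_sub_left _ _ _
  have hsum : 1 / L * ‖gradient f a - gradient f b‖ ^ 2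
      ≤ ⟪gradient f a - gradient f b, a - b⟫ := by
    have hbma : ⟪gradient f b, a - b⟫ = -⟪gradient f b, b - a⟫ := by
      rw [show a - b = -(b - a) by abel, inner_neg_right]
    rw [hi2, hbma]
    have : 1 / L = 1 / (2*L) + 1 / (2*L) := by field_simp; ring
    rw [this]
    linarith [k1, k2, hi1]
  have h2 : ‖gradient f a - gradient f b‖ ^ 2 / L ≤ ⟪gradient f a - gradient f b, a - b⟫ := by
    calc ‖gradient f a - gradient f b‖ ^ 2 / L
        = 1 / L * ‖gradient f a - gradient f b‖ ^ 2 := by ring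
      _ ≤ _ := hsum
  rw [div_le_iff₀ hL] at h2
  linarith

lemma aux_subgrad_mono {φ : E → ℝ} {x u x' u' : E}
    (h1 : IsSubgradient φ x u) (h2 : IsSubgradient φ x' u') :
    0 ≤ ⟪u' - u, x' - x⟫ := by
  have a1 := h1 x'
  have a2 := h2 x
  rw [show x - x' = -(x' - x) by abel, inner_neg_right] at a2
  rw [inner_sub_left]
  linarith

lemma aux_prox_subgrad {γ : ℝ} (hγ : 0 < γ) {φ : E → ℝ} (hφ : ConvexOn ℝ Set.univ φ)
    {y x : E} (hx : IsProxPt γ φ y x) :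
    IsSubgradient φ x (γ⁻¹ • (y - x)) := by
  intro w
  rw [ge_iff_le]
  have key : ∀ t : ℝ, 0 < t → t ≤ 1 →
      φ x + ⟪γ⁻¹ • (y - x), w - x⟫ ≤ φ w + t * (‖w - x‖ ^ 2 / (2 * γ)) := by
    intro t ht0 ht1
    have hu := hx (x + t • (w - x))
    have hcomb : φ (x + t • (w - x)) ≤ (1 - t) * φ x + t * φ w := by
      have hpt : x + t • (w - x) = (1 - t) • x + t • w := by module
      rw [hpt]
      have h := hφ.2 (Set.mem_univ x) (Set.mem_univ w)
        (show (0:ℝ) ≤ 1 - t by linarith) (show (0:ℝ) ≤ t by linarith)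
        (show (1 - t) + t = 1 by ring)
      simpa using h
    have hnorm : ‖x + t • (w - x) - y‖ ^ 2
        = ‖x - y‖ ^ 2 + 2 * t * ⟪x - y, w - x⟫ + t ^ 2 * ‖w - x‖ ^ 2 := by
      rw [show x + t • (w - x) - y = (x - y) + t • (w - x) by abel, norm_add_sq_real,
        real_inner_smul_right, norm_smul, Real.norm_eq_abs, abs_of_pos ht0, mul_pow]
      ring
    have hinner : ⟪γ⁻¹ • (y - x), w - x⟫ = -(γ⁻¹ * ⟪x - y, w - x⟫) := by
      rw [real_inner_smul_left, show y - x = -(x - y) by abel, inner_neg_left]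
      ring
    rw [hnorm] at hu
    rw [hinner]
    have h3 : t * φ x ≤ t * φ w
        + 1 / (2 * γ) * (2 * t * ⟪x - y, w - x⟫ + t ^ 2 * ‖w - x‖ ^ 2) := by
      nlinarith [hu, hcomb]
    have e1 : 1 / (2 * γ) * (2 * t * ⟪x - y, w - x⟫ + t ^ 2 * ‖w - x‖ ^ 2)
        = t * (γ⁻¹ * ⟪x - y, w - x⟫) + t * (t * (‖w - x‖ ^ 2 / (2 * γ))) := by
      field_simp
    rw [e1] at h3
    rw [← mul_le_mul_iff_of_pos_left ht0]
    linarith [h3]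
  have htend : Tendsto (fun t : ℝ => φ w + t * (‖w - x‖ ^ 2 / (2 * γ))) (𝓝[>] 0)
      (𝓝 (φ w)) := by
    have hc : Continuous fun t : ℝ => φ w + t * (‖w - x‖ ^ 2 / (2 * γ)) := by continuity
    have h2 : Tendsto (fun t : ℝ => φ w + t * (‖w - x‖ ^ 2 / (2 * γ))) (𝓝[>] 0)
        (𝓝 (φ w + 0 * (‖w - x‖ ^ 2 / (2 * γ)))) :=
      (hc.tendsto 0).mono_left (nhdsWithin_le_nhds (s := Set.Ioi 0))
    simpa using h2
  have hev : ∀ᶠ t in 𝓝[>] (0:ℝ),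
      φ x + ⟪γ⁻¹ • (y - x), w - x⟫ ≤ φ w + t * (‖w - x‖ ^ 2 / (2 * γ)) := by
    filter_upwards [Ioo_mem_nhdsGT (by norm_num : (0:ℝ) < 1)] with t ht
    exact key t ht.1 ht.2.le
  exact ge_of_tendsto htend hev

end Aux

/-- monotonicity of the gradient mapping. -/
theorem stmt_2 (p : ℕ) (hp : 0 < p) (γ : ℝ) (hγ : 0 < γ) (L : ℝ) (hL : 0 < L)
    (g h f : EuclideanSpace ℝ (Fin p) → ℝ)
    (hg : ConvexOn ℝ Set.univ g) (hh : ConvexOn ℝ Set.univ h)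
    (hf : ConvexOn ℝ Set.univ f) (hfL : LSmooth L f)
    (y x z yplus xplus zplus : EuclideanSpace ℝ (Fin p))
    (hstep : IsSplitStep γ g h f y x z)
    (hyplus : yplus = y - x + z)
    (hstepplus : IsSplitStep γ g h f yplus xplus zplus) :
    ‖γ⁻¹ • (xplus - zplus)‖ ^ 2 ≤
      ‖γ⁻¹ • (x - z)‖ ^ 2 -
        (1 - γ * L / 2) * ‖γ⁻¹ • (xplus - zplus) - γ⁻¹ • (x - z)‖ ^ 2 := by
  obtain ⟨hdiff, hlip⟩ := hfL
  subst hyplus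
  -- subgradient monotonicity for g
  have hgx := aux_prox_subgrad hγ hg hstep.1
  have hgx' := aux_prox_subgrad hγ hg hstepplus.1
  have hmonog := aux_subgrad_mono hgx hgx'
  -- subgradient monotonicity for h
  have hhz := aux_prox_subgrad hγ hh hstep.2
  have hhz' := aux_prox_subgrad hγ hh hstepplus.2
  have hmonoh := aux_subgrad_mono hhz hhz'
  -- cocoercivity of the gradient
  have hC := aux_coco hL hf hdiff hlip xplus x
  -- remove the γ⁻¹ factors from the monotonicity inequalities
  rw [← smul_sub, real_inner_smul_left] at hmonog hmonoh
  have hA0 : 0 ≤ ⟪y - x + z - xplus - (y - x), xplus - x⟫ := by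
    have h2 := mul_le_mul_of_nonneg_left hmonog hγ.le
    rwa [mul_zero, ← mul_assoc, mul_inv_cancel₀ hγ.ne', one_mul] at h2
  have hB0 : 0 ≤ ⟪(2 : ℝ) • xplus - (y - x + z) - γ • gradient f xplus - zplus -
      ((2 : ℝ) • x - y - γ • gradient f x - z), zplus - z⟫ := by
    have h2 := mul_le_mul_of_nonneg_left hmonoh hγ.le
    rwa [mul_zero, ← mul_assoc, mul_inv_cancel₀ hγ.ne', one_mul] at h2
  -- rewrite the vectors
  rw [show y - x + z - xplus - (y - x) = -((x - z) + (xplus - x)) by abel] at hA0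
  rw [show (2 : ℝ) • xplus - (y - x + z) - γ • gradient f xplus - zplus -
      ((2 : ℝ) • x - y - γ • gradient f x - z)
      = (2 : ℝ) • (xplus - x) + (x - z) - γ • (gradient f xplus - gradient f x)
        - (zplus - z) by module] at hB0
  -- scalar forms
  rw [inner_neg_left, inner_add_left, real_inner_self_eq_norm_sq] at hA0
  rw [inner_sub_left, inner_sub_left, inner_add_left, real_inner_smul_left,
    real_inner_smul_left, real_inner_self_eq_norm_sq] at hB0
  -- Cauchy-Schwarz
  have hCS := real_inner_le_norm (gradient f xplus - gradient f x)
    ((xplus - x) - (zplus - z))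
  rw [inner_sub_right] at hCS
  -- key scalar inequality
  have hkeyL : L * (-(2 * γ * ⟪gradient f xplus - gradient f x, zplus - z⟫))
      ≤ L * (γ * L / 2 * ‖(xplus - x) - (zplus - z)‖ ^ 2) := by
    nlinarith [mul_nonneg (mul_nonneg hγ.le hL.le) (sub_nonneg.mpr hCS),
      mul_nonneg hγ.le (sub_nonneg.mpr hC),
      mul_nonneg hγ.le (sq_nonneg (2 * ‖gradient f xplus - gradient f x‖
        - L * ‖(xplus - x) - (zplus - z)‖))]
  have hkey := le_of_mul_le_mul_left hkeyL hL
  -- norm expansions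
  have hW : ‖xplus - zplus‖ ^ 2 = ‖x - z‖ ^ 2
      + 2 * (⟪x - z, xplus - x⟫ - ⟪x - z, zplus - z⟫)
      + ‖(xplus - x) - (zplus - z)‖ ^ 2 := by
    rw [show xplus - zplus = (x - z) + ((xplus - x) - (zplus - z)) by abel,
      norm_add_sq_real, inner_sub_right]
  have hw : ‖(xplus - x) - (zplus - z)‖ ^ 2
      = ‖xplus - x‖ ^ 2 - 2 * ⟪xplus - x, zplus - z⟫ + ‖zplus - z‖ ^ 2 :=
    norm_sub_sq_real _ _
  -- main inequality without the γ⁻¹ scaling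
  have hmain : ‖xplus - zplus‖ ^ 2 ≤ ‖x - z‖ ^ 2
      - (1 - γ * L / 2) * ‖(xplus - zplus) - (x - z)‖ ^ 2 := by
    rw [show (xplus - zplus) - (x - z) = (xplus - x) - (zplus - z) by abel]
    nlinarith [hA0, hB0, hkey, hW, hw]
  -- reduce the goal to hmain
  rw [← smul_sub]
  have hsq : ∀ v : EuclideanSpace ℝ (Fin p), ‖γ⁻¹ • v‖ ^ 2 = (γ⁻¹) ^ 2 * ‖v‖ ^ 2 := by
    intro v
    rw [norm_smul, Real.norm_eq_abs, abs_of_pos (inv_pos.2 hγ), mul_pow]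
  rw [hsq, hsq, hsq]
  nlinarith [mul_le_mul_of_nonneg_left hmain (sq_nonneg γ⁻¹)]
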